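/- arXiv:1405.5428 — 2 statements merged into one kernel-verified Lean document; each statement's English description precedes it below -/
import Mathlib

section
/- Let d ≥ 1 and let W : ℝ^d → ℝ ∪ {+∞} satisfy Hypotheses (H1)–(H5). If there exists a global minimiser ρ ∈ P(ℝ^d) of the interaction energy E, then ρ is compactly supported. -/
open MeasureTheory Filter Metric
open scoped ENNReal

/-- `ℝ^d` with the Euclidean structure. -/
abbrev Ed (d : ℕ) : Type := EuclideanSpace ℝ (Fin d)

/-- The positive part of an extended real number, as an element of `ℝ≥0∞`. -/
noncomputable def EReal.posPart (x : EReal) : ℝ≥0∞ := (x ⊔ 0).abs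

/-- The integral of an `EReal`-valued function, defined as the difference (in `EReal`)
of the lower integrals of the positive and the negative parts. -/
noncomputable def eInt {α : Type*} [MeasurableSpace α] (μ : Measure α) (f : α → EReal) :
    EReal :=
  ((∫⁻ x, (f x).posPart ∂μ : ℝ≥0∞) : EReal) - ((∫⁻ x, (-f x).posPart ∂μ : ℝ≥0∞) : EReal)

/-- The interaction energy `E(ρ) = (1/2) ∬ W(x-y) dρ(x) dρ(y)`, with values in `EReal`. -/
noncomputable def energy {d : ℕ} (W : Ed d → EReal) (ρ : Measure (Ed d)) : EReal :=
  ((1 / 2 : ℝ) : EReal) * eInt (ρ.prod ρ) (fun p => W (p.1 - p.2))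

/-- The support of a measure: the set of points all of whose open neighbourhoods have
positive measure. -/
def msupport {α : Type*} [TopologicalSpace α] [MeasurableSpace α] (μ : Measure α) : Set α :=
  {x | ∀ U : Set α, IsOpen U → x ∈ U → 0 < μ U}

/-- `ρ ∈ P_R(ℝ^d)`: the support of `ρ` is contained in the closed ball `B̄(0,R)`. -/
def InBall {d : ℕ} (ρ : Measure (Ed d)) (R : ℝ) : Prop :=
  msupport ρ ⊆ Metric.closedBall (0 : Ed d) R

/-- `ρ` is a global minimiser of the interaction energy on `P(ℝ^d)`. -/
def IsMinimiser {d : ℕ} (W : Ed d → EReal) (ρ : Measure (Ed d)) : Prop :=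
  IsProbabilityMeasure ρ ∧
    ∀ μ : Measure (Ed d), IsProbabilityMeasure μ → energy W ρ ≤ energy W μ

/-- `ρ` is a global minimiser of the interaction energy on `P_R(ℝ^d)`. -/
def IsMinimiserOn {d : ℕ} (W : Ed d → EReal) (ρ : Measure (Ed d)) (R : ℝ) : Prop :=
  IsProbabilityMeasure ρ ∧ InBall ρ R ∧
    ∀ μ : Measure (Ed d), IsProbabilityMeasure μ → InBall μ R → energy W ρ ≤ energy W μ

/-! ### Auxiliary lemmas -/

lemma measurable_erealAbs : Measurable EReal.abs := by
  have h : EReal.abs = fun x : EReal =>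
      if x = ⊤ ∨ x = ⊥ then (⊤:ℝ≥0∞) else ENNReal.ofReal |x.toReal| := by
    funext x
    induction x with
    | bot => simp
    | coe r => simp [EReal.abs_def]
    | top => simp
  rw [h]
  have hs : MeasurableSet {x : EReal | x = ⊤ ∨ x = ⊥} := by
    have : {x : EReal | x = ⊤ ∨ x = ⊥} = {⊤, ⊥} := by ext x; simp
    rw [this]; exact (Set.toFinite _).measurableSet
  exact Measurable.ite hs measurable_const ((measurable_ereal_toReal.abs).ennreal_ofReal)

lemma measurable_posPart' : Measurable EReal.posPart :=
  measurable_erealAbs.comp (measurable_id.sup measurable_const)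

lemma posPart_coe (r : ℝ) : EReal.posPart (r : EReal) = ENNReal.ofReal r := by
  unfold EReal.posPart
  have : ((r : EReal) ⊔ 0) = ((max r 0 : ℝ) : EReal) := by
    rcases le_total r 0 with h | h <;>
      simp [sup_eq_right.2, sup_eq_left.2, EReal.coe_nonneg, EReal.coe_nonpos, h, max_eq_right,
        max_eq_left]
  rw [this, EReal.abs_def]
  rcases le_total r 0 with h | h
  · simp [abs_of_nonneg (le_max_right r 0), max_eq_right h, ENNReal.ofReal_of_nonpos h]
  · simp [abs_of_nonneg (le_max_right r 0), max_eq_left h, abs_of_nonneg h]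

lemma posPart_top : EReal.posPart ⊤ = ⊤ := by
  unfold EReal.posPart; simp

lemma posPart_bot : EReal.posPart ⊥ = 0 := by
  unfold EReal.posPart; simp

lemma posPart_le {x : EReal} {a : ℝ} (h : x ≤ (a : EReal)) :
    x.posPart ≤ ENNReal.ofReal a := by
  induction x with
  | bot => simp [posPart_bot]
  | coe r =>
      rw [posPart_coe]
      exact ENNReal.ofReal_le_ofReal (by exact_mod_cast h)
  | top => exact absurd h (by simp)

lemma le_posPart' {c : ℝ} {x : EReal} (h : (c : EReal) ≤ x) :
    ENNReal.ofReal c ≤ x.posPart := by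
  induction x with
  | bot => exact absurd h (by simp)
  | coe r =>
      rw [posPart_coe]
      exact ENNReal.ofReal_le_ofReal (by exact_mod_cast h)
  | top => simp [posPart_top]

lemma posPart_pointwise (a : ℝ) (ha : 0 ≤ a) (x : EReal) (hx : ((-a : ℝ) : EReal) ≤ x) :
    x.posPart + ENNReal.ofReal a = (x + (a : ℝ)).posPart + (-x).posPart := by
  induction x with
  | bot => exact absurd hx (by simp)
  | coe r =>
      have hr : -a ≤ r := by exact_mod_cast hx
      rw [posPart_coe, ← EReal.coe_add, posPart_coe, ← EReal.coe_neg, posPart_coe]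
      rcases le_total r 0 with h | h
      · rw [ENNReal.ofReal_of_nonpos h, ← ENNReal.ofReal_add (by linarith) (by linarith)]
        simp
      · rw [ENNReal.ofReal_of_nonpos (by linarith : -r ≤ 0), ENNReal.ofReal_add h ha]
        simp
  | top =>
      rw [posPart_top]
      have h1 : (⊤ : EReal) + (a : ℝ) = ⊤ := EReal.top_add_coe a
      rw [h1, posPart_top]
      simp

lemma ennreal_coe_toReal {x : ℝ≥0∞} (hx : x ≠ ⊤) : (x : EReal) = ((x.toReal : ℝ) : EReal) := by
  rw [← EReal.coe_toReal (x := (x : EReal)) (by simpa using hx) (by simp),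
    EReal.toReal_coe_ennreal]

lemma eInt_eq {α : Type*} [MeasurableSpace α] (ν : Measure α) [IsProbabilityMeasure ν]
    (f : α → EReal) (hf : Measurable f) (a : ℝ) (ha : 0 ≤ a)
    (hb : ∀ x, ((-a : ℝ) : EReal) ≤ f x) :
    eInt ν f = ((∫⁻ x, (f x + (a : ℝ)).posPart ∂ν : ℝ≥0∞) : EReal) - ((a : ℝ) : EReal) := by
  set P := ∫⁻ x, (f x).posPart ∂ν with hP
  set N := ∫⁻ x, (-f x).posPart ∂ν with hN
  set Vi := ∫⁻ x, (f x + (a : ℝ)).posPart ∂ν with hVi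
  have hNle : N ≤ ENNReal.ofReal a := by
    rw [hN]
    calc ∫⁻ x, (-f x).posPart ∂ν ≤ ∫⁻ _, ENNReal.ofReal a ∂ν := by
          apply lintegral_mono
          intro x
          apply posPart_le
          rw [EReal.neg_le, ← EReal.coe_neg]
          exact hb x
      _ = ENNReal.ofReal a := by simp
  have hNtop : N ≠ ⊤ := (lt_of_le_of_lt hNle ENNReal.ofReal_lt_top).ne
  have key : P + ENNReal.ofReal a = Vi + N := by
    rw [hP, hVi, hN]
    have hconst : ENNReal.ofReal a = ∫⁻ _, ENNReal.ofReal a ∂ν := by simp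
    rw [hconst,
      ← lintegral_add_right _ (measurable_const : Measurable fun _ : α => ENNReal.ofReal a),
      ← lintegral_add_right _ (show Measurable fun x => (-f x).posPart from
        measurable_posPart'.comp hf.neg)]
    congr 1
    funext x
    exact posPart_pointwise a ha (f x) (hb x)
  unfold eInt
  rw [← hP, ← hN]
  by_cases hVtop : Vi = ⊤
  · have hPtop : P = ⊤ := by
      by_contra hPt
      have : P + ENNReal.ofReal a ≠ ⊤ := by
        simp [ENNReal.add_ne_top, hPt, ENNReal.ofReal_ne_top]
      rw [key, hVtop] at this
      simp at this
    rw [hPtop, hVtop]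
    rw [ennreal_coe_toReal hNtop]
    simp [EReal.top_sub_coe]
  · have hPtop : P ≠ ⊤ := by
      intro h
      rw [h, top_add] at key
      rcases ENNReal.add_eq_top.1 key.symm with h' | h'
      · exact hVtop h'
      · exact absurd h' hNtop
    rw [ennreal_coe_toReal hNtop, ennreal_coe_toReal hPtop, ennreal_coe_toReal hVtop]
    rw [← EReal.coe_sub, ← EReal.coe_sub]
    norm_cast
    have := congrArg ENNReal.toReal key
    rw [ENNReal.toReal_add hPtop ENNReal.ofReal_ne_top,
      ENNReal.toReal_add hVtop hNtop, ENNReal.toReal_ofReal ha] at this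
    linarith

lemma measurable_add_const_ereal (a : ℝ) : Measurable (fun y : EReal => y + (a : ℝ)) := by
  have h : (fun y : EReal => y + (a : ℝ)) = fun y =>
      if y = ⊤ then (⊤ : EReal) else if y = ⊥ then (⊥ : EReal)
      else ((y.toReal + a : ℝ) : EReal) := by
    funext y
    induction y with
    | bot => simp [EReal.bot_add]
    | coe r => simp [← EReal.coe_add]
    | top => simp [EReal.top_add_coe]
  rw [h]
  have h1 : MeasurableSet {y : EReal | y = ⊤} := by
    have : {y : EReal | y = ⊤} = {⊤} := by ext y; simp
    rw [this]; exact measurableSet_singleton _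
  have h2 : MeasurableSet {y : EReal | y = ⊥} := by
    have : {y : EReal | y = ⊥} = {⊥} := by ext y; simp
    rw [this]; exact measurableSet_singleton _
  exact Measurable.ite h1 measurable_const (Measurable.ite h2 measurable_const
    (measurable_coe_real_ereal.comp (measurable_ereal_toReal.add measurable_const)))

lemma msupport_closed {α : Type*} [TopologicalSpace α] [MeasurableSpace α] (μ : Measure α) :
    IsClosed (msupport μ) := by
  rw [← isOpen_compl_iff, isOpen_iff_mem_nhds]
  intro x hx
  simp only [msupport, Set.mem_compl_iff, Set.mem_setOf_eq, not_forall] at hx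
  obtain ⟨U, hU, hxU, hμU⟩ := hx
  push_neg at hμU
  have hμU0 : μ U = 0 := le_antisymm hμU zero_le
  refine Filter.mem_of_superset (hU.mem_nhds hxU) ?_
  intro y hy
  simp only [msupport, Set.mem_compl_iff, Set.mem_setOf_eq, not_forall]
  exact ⟨U, hU, hy, by simp [hμU0]⟩

set_option maxHeartbeats 1000000 in
/-- **Corollary.** Under Hypotheses (H1)–(H5), any global minimiser of the interaction
energy on `P(ℝ^d)` is compactly supported. -/
theorem global_minimiser_compactly_supported
    {d : ℕ} (hd : 1 ≤ d) (W : Ed d → EReal) (hWmeas : Measurable W)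
    -- (H1)
    (Wmin : ℝ) (hWmin : Wmin < 0) (hbound : ∀ x, (Wmin : EReal) ≤ W x)
    -- (H2)
    (hloc : ∀ (x : Ed d) (r : ℝ), 0 < r →
      ∫⁻ y in Metric.ball x r, (W y).abs ∂volume < ⊤)
    -- (H3)
    (hsym : ∀ x, W (-x) = W x)
    -- (H4)
    (Winf : EReal) (hlim : Tendsto W (cocompact (Ed d)) (nhds Winf))
    (hunst : ∃ ρ : Measure (Ed d), IsProbabilityMeasure ρ ∧
      energy W ρ < ((1 / 2 : ℝ) : EReal) * Winf)
    -- (H5)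
    (hlsc : LowerSemicontinuous W)
    (ρ : Measure (Ed d)) (hρ : IsMinimiser W ρ) :
    IsCompact (msupport ρ) := by
  classical
  have hprob : IsProbabilityMeasure ρ := hρ.1
  set a : ℝ := -Wmin with ha_def
  have ha : 0 < a := by rw [ha_def]; linarith
  have hbd : ∀ x, ((-a : ℝ) : EReal) ≤ W x := by
    intro x; simpa [ha_def] using hbound x
  set V : Ed d → ℝ≥0∞ := fun z => (W z + (a : ℝ)).posPart with hV
  have hsubmeas : Measurable fun p : Ed d × Ed d => W (p.1 - p.2) :=
    hWmeas.comp (measurable_fst.sub measurable_snd)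
  have hVmeas : Measurable fun p : Ed d × Ed d => V (p.1 - p.2) :=
    measurable_posPart'.comp ((measurable_add_const_ereal a).comp hsubmeas)
  set J : Measure (Ed d) → ℝ≥0∞ :=
    fun μ => ∫⁻ p, V (p.1 - p.2) ∂(μ.prod μ) with hJ
  have energy_eq : ∀ (μ : Measure (Ed d)), IsProbabilityMeasure μ →
      energy W μ = ((1/2 : ℝ) : EReal) * (((J μ : ℝ≥0∞) : EReal) - ((a : ℝ) : EReal)) := by
    intro μ hμ
    haveI := hμ
    unfold energy
    congr 1
    exact eInt_eq (μ.prod μ) _ hsubmeas a ha.le (fun p => hbd _)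
  -- the energy of the minimiser is finite
  obtain ⟨μ₀, hμ₀, hμ₀E⟩ := hunst
  have hElt : energy W ρ < ((1/2 : ℝ) : EReal) * Winf := lt_of_le_of_lt (hρ.2 μ₀ hμ₀) hμ₀E
  have hhalfpos : (0 : EReal) < ((1/2 : ℝ) : EReal) := by
    rw [EReal.coe_pos]; norm_num
  have hJtop : J ρ ≠ ⊤ := by
    intro h
    rw [energy_eq ρ hprob, h, EReal.coe_ennreal_top, EReal.top_sub_coe,
      EReal.mul_top_of_pos hhalfpos] at hElt
    exact not_top_lt hElt
  set i : ℝ := (J ρ).toReal with hi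
  have hi0 : 0 ≤ i := ENNReal.toReal_nonneg
  have hEρ : energy W ρ = ((1/2 * (i - a) : ℝ) : EReal) := by
    rw [energy_eq ρ hprob, ennreal_coe_toReal hJtop, ← hi, ← EReal.coe_sub, ← EReal.coe_mul]
  -- find a real threshold c with i - a < c < Winf
  have hlt : ((i - a : ℝ) : EReal) < Winf := by
    by_contra hcon
    push_neg at hcon
    have h2 : ((1/2 : ℝ) : EReal) * Winf ≤ ((1/2 : ℝ) : EReal) * ((i - a : ℝ) : EReal) :=
      mul_le_mul_of_nonneg_left hcon hhalfpos.le
    rw [← EReal.coe_mul] at h2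
    rw [hEρ] at hElt
    exact absurd (lt_of_lt_of_le hElt h2) (lt_irrefl _)
  obtain ⟨z, hz1, hz2⟩ := exists_between hlt
  have hzbot : z ≠ ⊥ := ne_bot_of_gt hz1
  have hztop : z ≠ ⊤ := ne_top_of_lt hz2
  set c : ℝ := z.toReal with hc
  have hzc : (c : EReal) = z := EReal.coe_toReal hztop hzbot
  have hic : i - a < c := by
    have := hz1; rw [← hzc] at this; exact_mod_cast this
  have hcW : (c : EReal) < Winf := by rw [hzc]; exact hz2
  have hca : 0 < c + a := by linarith
  -- far-field lower bound on W
  have hfar : ∃ L : ℝ, 0 ≤ L ∧ ∀ zz : Ed d, L < ‖zz‖ → ENNReal.ofReal (c + a) ≤ V zz := by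
    have hev : ∀ᶠ x in cocompact (Ed d), W x ∈ Set.Ioi (c : EReal) :=
      hlim (isOpen_Ioi.mem_nhds hcW)
    rw [hasBasis_cocompact.eventually_iff] at hev
    obtain ⟨K, hK, hKW⟩ := hev
    obtain ⟨L, hL⟩ := hK.isBounded.subset_closedBall 0
    refine ⟨max L 0, le_max_right _ _, fun zz hzz => ?_⟩
    have hnotK : zz ∉ K := by
      intro hmem
      have := hL hmem
      rw [mem_closedBall, dist_zero_right] at this
      exact absurd (lt_of_le_of_lt (le_max_left L 0) hzz) (not_lt.2 this)
    have hWz : (c : EReal) < W zz := hKW hnotK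
    apply le_posPart'
    calc ((c + a : ℝ) : EReal) = (c : EReal) + (a : ℝ) := by rw [EReal.coe_add]
      _ ≤ W zz + (a : ℝ) := by
          apply add_le_add_left hWz.le
  obtain ⟨L, hL0, hLfar⟩ := hfar
  -- choose R₀ capturing most of the mass
  set δ : ℝ := (c + a - i) / (2 * (c + a)) with hδ
  have hδ0 : 0 < δ := by
    apply div_pos (by linarith) (by linarith)
  have hδ1 : δ < 1 := by
    rw [hδ, div_lt_one (by linarith)]
    linarith
  have hmass : ∃ R0 : ℝ, 0 ≤ R0 ∧ ENNReal.ofReal (1 - δ) ≤ ρ (closedBall (0 : Ed d) R0) := by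
    have hmono : Monotone fun n : ℕ => closedBall (0 : Ed d) n := by
      intro n k hnk
      exact closedBall_subset_closedBall (by exact_mod_cast hnk)
    have hunion : ⋃ n : ℕ, closedBall (0 : Ed d) n = Set.univ := by
      ext y
      simp only [Set.mem_iUnion, Set.mem_univ, iff_true, mem_closedBall, dist_zero_right]
      obtain ⟨n, hn⟩ := exists_nat_ge ‖y‖
      exact ⟨n, hn⟩
    have htend : Tendsto (fun n : ℕ => ρ (closedBall (0 : Ed d) n)) atTop
        (nhds (ρ (Set.univ))) := by
      have := tendsto_measure_iUnion_atTop (μ := ρ) hmono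
      rwa [hunion] at this
    rw [measure_univ] at htend
    have hlt1 : ENNReal.ofReal (1 - δ) < 1 := by
      rw [← ENNReal.ofReal_one]
      exact ENNReal.ofReal_lt_ofReal_iff_of_nonneg (by linarith) |>.2 (by linarith)
    have hev := htend (Ioi_mem_nhds hlt1)
    rw [mem_map, mem_atTop_sets] at hev
    obtain ⟨n, hn⟩ := hev
    exact ⟨n, Nat.cast_nonneg n, le_of_lt (hn n le_rfl)⟩
  obtain ⟨R0, hR00, hR0⟩ := hmass
  set R : ℝ := R0 + L + 1 with hR
  set S : Set (Ed d) := closedBall (0 : Ed d) R with hS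
  have hSmeas : MeasurableSet S := measurableSet_closedBall
  -- it suffices to show the support is contained in S
  suffices hsub : msupport ρ ⊆ S by
    exact (isCompact_closedBall (0 : Ed d) R).of_isClosed_subset (msupport_closed ρ) hsub
  by_contra hnot
  rw [Set.not_subset] at hnot
  obtain ⟨x, hxsupp, hxS⟩ := hnot
  have hmO : 0 < ρ Sᶜ := hxsupp Sᶜ (Metric.isClosed_closedBall).isOpen_compl hxS
  set ν := ρ.prod ρ with hν
  set Oc : Set (Ed d) := Sᶜ with hOc
  have hOmeas : MeasurableSet Oc := hSmeas.compl
  set B0 : Set (Ed d) := closedBall (0 : Ed d) R0 with hB0s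
  have hB0meas : MeasurableSet B0 := measurableSet_closedBall
  have hB0S : B0 ⊆ S := closedBall_subset_closedBall (by rw [hR]; linarith)
  set ISS := ∫⁻ p in S ×ˢ S, V (p.1 - p.2) ∂ν with hISS
  set ISO := ∫⁻ p in S ×ˢ Oc, V (p.1 - p.2) ∂ν with hISO
  set IOS := ∫⁻ p in Oc ×ˢ S, V (p.1 - p.2) ∂ν with hIOS
  set IOO := ∫⁻ p in Oc ×ˢ Oc, V (p.1 - p.2) ∂ν with hIOO
  have hJρ : J ρ = ∫⁻ p, V (p.1 - p.2) ∂ν := rfl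
  -- splitting the integral into four pieces
  have hsplit1 : ∀ (A : Set (Ed d)), MeasurableSet A →
      ∫⁻ p in A ×ˢ (Set.univ : Set (Ed d)), V (p.1 - p.2) ∂ν =
      ∫⁻ p in A ×ˢ S, V (p.1 - p.2) ∂ν + ∫⁻ p in A ×ˢ Oc, V (p.1 - p.2) ∂ν := by
    intro A hA
    have hset : A ×ˢ (Set.univ : Set (Ed d)) = (A ×ˢ S) ∪ (A ×ˢ Oc) := by
      rw [← Set.prod_union, Set.union_compl_self]
    have hdisj : Disjoint (A ×ˢ S) (A ×ˢ Oc) := by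
      rw [Set.disjoint_left]
      rintro ⟨p1, p2⟩ ⟨_, h2⟩ ⟨_, h4⟩
      exact h4 h2
    rw [hset, lintegral_union (hA.prod hOmeas) hdisj]
  have hsplit : J ρ = ISS + ISO + (IOS + IOO) := by
    rw [hJρ, ← lintegral_add_compl _ (hSmeas.prod MeasurableSet.univ)]
    have hcompl : (S ×ˢ (Set.univ : Set (Ed d)))ᶜ = Oc ×ˢ (Set.univ : Set (Ed d)) := by
      ext p; simp [hOc]
    rw [hcompl, hsplit1 S hSmeas, hsplit1 Oc hOmeas]
  -- the renormalised restricted measure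
  have hmS0 : ρ S ≠ 0 := by
    intro h
    have hle2 : ρ B0 ≤ ρ S := measure_mono hB0S
    rw [h, le_zero_iff] at hle2
    have hpos : (0 : ℝ≥0∞) < ENNReal.ofReal (1 - δ) := ENNReal.ofReal_pos.2 (by linarith)
    rw [hle2] at hR0
    exact absurd (lt_of_lt_of_le hpos hR0) (by simp)
  have hmStop : ρ S ≠ ⊤ := (measure_lt_top ρ S).ne
  set μ1 : Measure (Ed d) := (ρ S)⁻¹ • ρ.restrict S with hμ1
  haveI hμ1prob : IsProbabilityMeasure μ1 := by
    constructor
    rw [hμ1, Measure.smul_apply, Measure.restrict_apply_univ, smul_eq_mul]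
    exact ENNReal.inv_mul_cancel hmS0 hmStop
  have hinvtop : (ρ S)⁻¹ ≠ ⊤ := by
    simp [ENNReal.inv_ne_top, hmS0]
  have hJμ1 : J μ1 = (ρ S)⁻¹ * ((ρ S)⁻¹ * ISS) := by
    have h1 : J μ1 = ∫⁻ x, ∫⁻ y, V (x - y) ∂μ1 ∂μ1 := by
      rw [hJ]
      exact lintegral_prod _ hVmeas.aemeasurable
    have h2 : ∫⁻ p in S ×ˢ S, V (p.1 - p.2) ∂ν =
        ∫⁻ x, ∫⁻ y, V (x - y) ∂(ρ.restrict S) ∂(ρ.restrict S) := by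
      rw [hν, ← Measure.prod_restrict]
      exact lintegral_prod _ hVmeas.aemeasurable
    rw [h1, hISS, h2, hμ1]
    rw [lintegral_smul_measure]
    congr 1
    rw [← lintegral_const_mul' _ _ hinvtop]
    congr 1
    funext x
    rw [lintegral_smul_measure, smul_eq_mul]
  have hcomp : J ρ ≤ J μ1 := by
    have h := hρ.2 μ1 hμ1prob
    rw [energy_eq ρ hprob, energy_eq μ1 hμ1prob] at h
    by_cases htop : J μ1 = ⊤
    · rw [htop]; exact le_top
    · rw [ennreal_coe_toReal hJtop, ennreal_coe_toReal htop, ← EReal.coe_sub, ← EReal.coe_sub,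
        ← EReal.coe_mul, ← EReal.coe_mul, EReal.coe_le_coe_iff] at h
      have h' : (J ρ).toReal ≤ (J μ1).toReal := by linarith
      exact (ENNReal.toReal_le_toReal hJtop htop).1 h'
  have hkey : ρ S * ρ S * J ρ ≤ ISS := by
    calc ρ S * ρ S * J ρ ≤ ρ S * ρ S * ((ρ S)⁻¹ * ((ρ S)⁻¹ * ISS)) :=
          mul_le_mul_right (hcomp.trans_eq hJμ1) _
      _ = (ρ S * (ρ S)⁻¹) * ((ρ S) * (ρ S)⁻¹) * ISS := by ring
      _ = ISS := by rw [ENNReal.mul_inv_cancel hmS0 hmStop]; ring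
  -- cross-term lower bounds
  have hOSbound : ENNReal.ofReal (c + a) * (ρ Oc * ρ B0) ≤ IOS := by
    calc ENNReal.ofReal (c + a) * (ρ Oc * ρ B0)
        = ∫⁻ _ in Oc ×ˢ B0, ENNReal.ofReal (c + a) ∂ν := by
          rw [setLIntegral_const, hν, Measure.prod_prod]
      _ ≤ ∫⁻ p in Oc ×ˢ B0, V (p.1 - p.2) ∂ν := by
          apply setLIntegral_mono' (hOmeas.prod hB0meas)
          rintro ⟨p1, p2⟩ ⟨hp1, hp2⟩
          apply hLfar
          have h1 : R < ‖p1‖ := by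
            have : p1 ∉ closedBall (0 : Ed d) R := hp1
            rw [mem_closedBall, dist_zero_right, not_le] at this
            exact this
          have h2 : ‖p2‖ ≤ R0 := by
            have : p2 ∈ closedBall (0 : Ed d) R0 := hp2
            rwa [mem_closedBall, dist_zero_right] at this
          have h3 : ‖p1‖ - ‖p2‖ ≤ ‖p1 - p2‖ := norm_sub_norm_le p1 p2
          rw [hR] at h1
          linarith
      _ ≤ IOS := lintegral_mono' (Measure.restrict_mono
            (Set.prod_mono (subset_refl Oc) hB0S) le_rfl) le_rfl
  have hSObound : ENNReal.ofReal (c + a) * (ρ B0 * ρ Oc) ≤ ISO := by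
    calc ENNReal.ofReal (c + a) * (ρ B0 * ρ Oc)
        = ∫⁻ _ in B0 ×ˢ Oc, ENNReal.ofReal (c + a) ∂ν := by
          rw [setLIntegral_const, hν, Measure.prod_prod]
      _ ≤ ∫⁻ p in B0 ×ˢ Oc, V (p.1 - p.2) ∂ν := by
          apply setLIntegral_mono' (hB0meas.prod hOmeas)
          rintro ⟨p1, p2⟩ ⟨hp1, hp2⟩
          apply hLfar
          have h1 : R < ‖p2‖ := by
            have : p2 ∉ closedBall (0 : Ed d) R := hp2
            rw [mem_closedBall, dist_zero_right, not_le] at this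
            exact this
          have h2 : ‖p1‖ ≤ R0 := by
            have : p1 ∈ closedBall (0 : Ed d) R0 := hp1
            rwa [mem_closedBall, dist_zero_right] at this
          have h3 : ‖p2‖ - ‖p1‖ ≤ ‖p1 - p2‖ := by
            rw [norm_sub_rev]
            exact norm_sub_norm_le p2 p1
          rw [hR] at h1
          linarith
      _ ≤ ISO := lintegral_mono' (Measure.restrict_mono
            (Set.prod_mono hB0S (subset_refl Oc)) le_rfl) le_rfl
  -- finiteness of the pieces
  have hpiece : ∀ (A B : Set (Ed d)), ∫⁻ p in A ×ˢ B, V (p.1 - p.2) ∂ν ≤ J ρ := by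
    intro A B
    rw [hJρ]
    exact setLIntegral_le_lintegral _ _
  have hISStop : ISS ≠ ⊤ := ((hpiece S S).trans_lt (lt_top_iff_ne_top.2 hJtop)).ne
  have hISOtop : ISO ≠ ⊤ := ((hpiece S Oc).trans_lt (lt_top_iff_ne_top.2 hJtop)).ne
  have hIOStop : IOS ≠ ⊤ := ((hpiece Oc S).trans_lt (lt_top_iff_ne_top.2 hJtop)).ne
  have hIOOtop : IOO ≠ ⊤ := ((hpiece Oc Oc).trans_lt (lt_top_iff_ne_top.2 hJtop)).ne
  -- pass to real numbers
  set s : ℝ := (ρ S).toReal with hsdef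
  set m : ℝ := (ρ Oc).toReal with hmdef
  set bb : ℝ := (ρ B0).toReal with hbdef
  set iss : ℝ := ISS.toReal
  set iso : ℝ := ISO.toReal
  set ios : ℝ := IOS.toReal
  set ioo : ℝ := IOO.toReal
  have hsm : s + m = 1 := by
    have h1 : ρ S + ρ Oc = 1 := by
      rw [hOc, measure_add_measure_compl hSmeas, measure_univ]
    have h2 := congrArg ENNReal.toReal h1
    rwa [ENNReal.toReal_add hmStop (measure_lt_top ρ Oc).ne, ENNReal.toReal_one] at h2
  have hm0 : 0 < m := ENNReal.toReal_pos hmO.ne' (measure_lt_top ρ Oc).ne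
  have hbb : 1 - δ ≤ bb := by
    have h := ENNReal.toReal_mono (measure_lt_top ρ B0).ne hR0
    rwa [ENNReal.toReal_ofReal (by linarith)] at h
  have hsum : iss + iso + (ios + ioo) = i := by
    have h := congrArg ENNReal.toReal hsplit
    rw [ENNReal.toReal_add (by exact ENNReal.add_ne_top.2 ⟨hISStop, hISOtop⟩)
        (by exact ENNReal.add_ne_top.2 ⟨hIOStop, hIOOtop⟩),
      ENNReal.toReal_add hISStop hISOtop, ENNReal.toReal_add hIOStop hIOOtop] at h
    exact h.symm
  have hf2 : s * s * i ≤ iss := by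
    have h := ENNReal.toReal_mono hISStop hkey
    rwa [ENNReal.toReal_mul, ENNReal.toReal_mul] at h
  have hf3a : (c + a) * (m * bb) ≤ ios := by
    have h := ENNReal.toReal_mono hIOStop hOSbound
    rwa [ENNReal.toReal_mul, ENNReal.toReal_mul, ENNReal.toReal_ofReal hca.le] at h
  have hf3b : (c + a) * (bb * m) ≤ iso := by
    have h := ENNReal.toReal_mono hISOtop hSObound
    rwa [ENNReal.toReal_mul, ENNReal.toReal_mul, ENNReal.toReal_ofReal hca.le] at h
  have hs0 : 0 ≤ s := ENNReal.toReal_nonneg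
  have hioo0 : 0 ≤ ioo := ENNReal.toReal_nonneg
  have hilt : i < c + a := by linarith
  clear_value s m bb iss iso ios ioo i δ c
  have hδval : 2 * (c + a) * δ = c + a - i := by
    rw [hδ]
    field_simp
  -- final contradiction
  have st1 : 2 * ((c + a) * (m * bb)) ≤ iso + ios := by nlinarith [hf3a, hf3b]
  have st2 : iso + ios ≤ i - s * s * i := by linarith
  have hs_def : s = 1 - m := by linarith
  have st3 : i - s * s * i ≤ 2 * i * m := by
    rw [hs_def]
    nlinarith [mul_nonneg hi0 (mul_self_nonneg m)]
  have st4 : 2 * ((c + a) * (m * bb)) ≤ 2 * i * m := by linarith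
  have st5 : (c + a) * bb ≤ i := by
    by_contra hcon
    push_neg at hcon
    nlinarith [mul_pos hm0 (sub_pos.2 hcon)]
  have st6 : (c + a) * (1 - δ) ≤ (c + a) * bb :=
    mul_le_mul_of_nonneg_left hbb hca.le
  nlinarith [st5, st6, hδval, hilt]
end

section
/- Let d ≥ 1 and let W : ℝ^d → ℝ ∪ {+∞} be measurable, bounded below by a finite constant, and lower semicontinuous. Then the interaction energy E is weakly-* lower semicontinuous on P(ℝ^d): for any sequence (ρ_n) of probability measures on ℝ^d converging weakly-* to a probability measure ρ, one has E(ρ) ≤ liminf_{n→∞} E(ρ_n). -/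
open MeasureTheory Filter Metric
open scoped ENNReal

namespace EReal

@[simp] lemma posPart_coe (x : ℝ) : EReal.posPart (x : EReal) = ENNReal.ofReal x := by
  unfold EReal.posPart
  rcases le_total x 0 with h | h
  · rw [sup_eq_right.2 (by exact_mod_cast h : (x : EReal) ≤ 0), EReal.abs_zero,
      eq_comm, ENNReal.ofReal_eq_zero]
    exact h
  · rw [sup_eq_left.2 (by exact_mod_cast h : (0 : EReal) ≤ (x : EReal)), EReal.abs_def,
      abs_of_nonneg h]

@[simp] lemma posPart_top : EReal.posPart ⊤ = ⊤ := by
  unfold EReal.posPart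
  rw [sup_eq_left.2 (le_top : (0 : EReal) ≤ ⊤)]
  rfl

@[simp] lemma posPart_bot : EReal.posPart ⊥ = 0 := by
  unfold EReal.posPart
  rw [sup_eq_right.2 (bot_le : (⊥ : EReal) ≤ 0), EReal.abs_zero]

lemma coe_ennreal_eq_toReal {x : ℝ≥0∞} (hx : x ≠ ⊤) : (x : EReal) = ((x.toReal : ℝ) : EReal) := by
  conv_lhs => rw [← ENNReal.ofReal_toReal hx]
  rw [EReal.coe_ennreal_ofReal, max_eq_left ENNReal.toReal_nonneg]

lemma lt_posPart_iff {t : ℝ≥0∞} (ht : t ≠ ⊤) (z : EReal) :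
    t < EReal.posPart z ↔ (t : EReal) < z := by
  induction z with
  | bot => simp [posPart_bot]
  | coe x =>
      rw [posPart_coe, ENNReal.lt_ofReal_iff_toReal_lt ht, coe_ennreal_eq_toReal ht,
        EReal.coe_lt_coe_iff]
  | top =>
      simp only [posPart_top]
      constructor
      · intro _
        exact lt_of_le_of_ne le_top (by simpa [EReal.coe_ennreal_eq_top_iff] using ht)
      · intro _
        exact lt_top_iff_ne_top.2 ht

lemma posPart_mono : Monotone EReal.posPart := by
  intro a b hab
  refine le_of_forall_lt fun t ht => ?_
  have htne : t ≠ ⊤ := (lt_of_lt_of_le ht le_top).ne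
  exact (lt_posPart_iff htne b).2 (lt_of_lt_of_le ((lt_posPart_iff htne a).1 ht) hab)

lemma measurable_posPart : Measurable EReal.posPart := posPart_mono.measurable

lemma posPart_sub_identity (z : EReal) (c : ℝ) (hz : (c : EReal) ≤ z) :
    EReal.posPart z + ENNReal.ofReal (-c)
      = EReal.posPart (z - (c : EReal)) + EReal.posPart (-z) + ENNReal.ofReal c := by
  induction z with
  | bot => exact absurd hz (by simp)
  | coe x =>
      have hcx : c ≤ x := by exact_mod_cast hz
      rw [← EReal.coe_sub, ← EReal.coe_neg, posPart_coe, posPart_coe, posPart_coe]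
      rcases le_total 0 c with h0c | hc0
      · rw [ENNReal.ofReal_of_nonpos (by linarith : -c ≤ 0),
          ENNReal.ofReal_of_nonpos (by linarith : -x ≤ 0), add_zero, add_zero,
          ← ENNReal.ofReal_add (by linarith : (0:ℝ) ≤ x - c) h0c]
        all_goals congr 1
        all_goals ring
      · rcases le_total 0 x with h0x | hx0
        · rw [ENNReal.ofReal_of_nonpos (by linarith : -x ≤ 0), ENNReal.ofReal_of_nonpos hc0,
            add_zero, add_zero, ← ENNReal.ofReal_add h0x (by linarith : (0:ℝ) ≤ -c)]
          all_goals congr 1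
          all_goals ring
        · rw [ENNReal.ofReal_of_nonpos hx0, ENNReal.ofReal_of_nonpos hc0, zero_add, add_zero,
            ← ENNReal.ofReal_add (by linarith : (0:ℝ) ≤ x - c) (by linarith : (0:ℝ) ≤ -x)]
          all_goals congr 1
          all_goals ring
  | top =>
      rw [EReal.top_sub_coe, posPart_top]
      simp

end EReal

lemma eInt_eq_lintegral_add {α : Type*} [MeasurableSpace α] (μ : Measure α)
    [IsProbabilityMeasure μ] (f : α → EReal) (hf : Measurable f) (c : ℝ)
    (hb : ∀ x, (c : EReal) ≤ f x) :
    eInt μ f = ((∫⁻ x, EReal.posPart (f x - (c : EReal)) ∂μ : ℝ≥0∞) : EReal) + (c : EReal) := by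
  set P := ∫⁻ x, (f x).posPart ∂μ with hP
  set N := ∫⁻ x, (-f x).posPart ∂μ with hN
  set Gg := ∫⁻ x, EReal.posPart (f x - (c : EReal)) ∂μ with hGg
  have meas1 : Measurable fun x => (f x).posPart := EReal.measurable_posPart.comp hf
  have meas2 : Measurable fun x => EReal.posPart (-f x) := by
    have : Antitone fun z : EReal => EReal.posPart (-z) :=
      fun a b hab => EReal.posPart_mono (EReal.neg_le_neg_iff.2 hab)
    exact this.measurable.comp hf
  have meas3 : Measurable fun x => EReal.posPart (f x - (c : EReal)) := by
    have : Monotone fun z : EReal => EReal.posPart (z - (c : EReal)) :=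
      fun a b hab => EReal.posPart_mono (EReal.sub_le_sub hab le_rfl)
    exact this.measurable.comp hf
  have Npt : ∀ x, EReal.posPart (-f x) ≤ ENNReal.ofReal (-c) := by
    intro x
    have h1 : -f x ≤ ((-c : ℝ) : EReal) := by
      rw [EReal.coe_neg]; exact EReal.neg_le_neg_iff.2 (hb x)
    have h2 := EReal.posPart_mono h1
    rwa [EReal.posPart_coe] at h2
  have Nbound : N ≤ ENNReal.ofReal (-c) := by
    calc N ≤ ∫⁻ _, ENNReal.ofReal (-c) ∂μ := lintegral_mono Npt
    _ = ENNReal.ofReal (-c) := by rw [lintegral_const, measure_univ, mul_one]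
  have Nne : N ≠ ⊤ := (lt_of_le_of_lt Nbound ENNReal.ofReal_lt_top).ne
  have key : P + ENNReal.ofReal (-c) = Gg + N + ENNReal.ofReal c := by
    have h1 : ∫⁻ x, ((f x).posPart + ENNReal.ofReal (-c)) ∂μ = P + ENNReal.ofReal (-c) := by
      rw [lintegral_add_right _ measurable_const, lintegral_const, measure_univ, mul_one]
    have h2 : ∫⁻ x, (EReal.posPart (f x - (c : EReal)) + EReal.posPart (-f x)
        + ENNReal.ofReal c) ∂μ = Gg + N + ENNReal.ofReal c := by
      rw [lintegral_add_right _ measurable_const, lintegral_add_left meas3, lintegral_const,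
        measure_univ, mul_one]
    rw [← h1, ← h2]
    exact lintegral_congr fun x => EReal.posPart_sub_identity (f x) c (hb x)
  show ((P : ℝ≥0∞) : EReal) - ((N : ℝ≥0∞) : EReal) = ((Gg : ℝ≥0∞) : EReal) + (c : EReal)
  rcases eq_top_or_lt_top Gg with hGtop | hGlt
  · have hPtop : P = ⊤ := by
      have : P + ENNReal.ofReal (-c) = ⊤ := by rw [key, hGtop]; simp
      simpa [ENNReal.add_eq_top, ENNReal.ofReal_ne_top] using this
    rw [hPtop, hGtop, EReal.coe_ennreal_top, EReal.coe_ennreal_eq_toReal Nne,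
      EReal.top_sub_coe, EReal.top_add_coe]
  · have hPne : P ≠ ⊤ := by
      intro hPtop
      have : P + ENNReal.ofReal (-c) = ⊤ := by rw [hPtop]; simp
      rw [key] at this
      exact (ENNReal.add_ne_top.2 ⟨ENNReal.add_ne_top.2 ⟨hGlt.ne, Nne⟩,
        ENNReal.ofReal_ne_top⟩) this
    have hreal : P.toReal + (ENNReal.ofReal (-c)).toReal
        = Gg.toReal + N.toReal + (ENNReal.ofReal c).toReal := by
      have := congrArg ENNReal.toReal key
      rwa [ENNReal.toReal_add hPne ENNReal.ofReal_ne_top,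
        ENNReal.toReal_add (ENNReal.add_ne_top.2 ⟨hGlt.ne, Nne⟩) ENNReal.ofReal_ne_top,
        ENNReal.toReal_add hGlt.ne Nne] at this
    have hc' : (ENNReal.ofReal c).toReal - (ENNReal.ofReal (-c)).toReal = c := by
      rcases le_total 0 c with h | h
      · rw [ENNReal.toReal_ofReal h, ENNReal.ofReal_of_nonpos (by linarith : -c ≤ 0)]
        simp
      · rw [ENNReal.ofReal_of_nonpos h, ENNReal.toReal_ofReal (by linarith : (0:ℝ) ≤ -c)]
        simp
    rw [EReal.coe_ennreal_eq_toReal hPne, EReal.coe_ennreal_eq_toReal Nne,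
      EReal.coe_ennreal_eq_toReal hGlt.ne, ← EReal.coe_sub, ← EReal.coe_add,
      EReal.coe_eq_coe_iff]
    linarith

lemma iSup_min_natCast (a : ℝ≥0∞) : ⨆ k : ℕ, min a (k : ℝ≥0∞) = a := by
  apply le_antisymm (iSup_le fun k => min_le_left _ _)
  rcases eq_top_or_lt_top a with rfl | ha
  · refine le_of_forall_lt fun b hb => ?_
    obtain ⟨k, hk⟩ := ENNReal.exists_nat_gt hb.ne
    refine lt_of_lt_of_le hk (le_trans (le_min le_top le_rfl)
      (le_iSup (fun k : ℕ => min (⊤:ℝ≥0∞) (k:ℝ≥0∞)) k))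
  · obtain ⟨k, hk⟩ := ENNReal.exists_nat_gt ha.ne
    exact le_trans (le_min le_rfl hk.le) (le_iSup (fun k : ℕ => min a (k:ℝ≥0∞)) k)

lemma layer_repr {Ω : Type*} [MeasurableSpace Ω] (ν : Measure Ω) (H : Ω → ℝ≥0∞)
    (hm : Measurable H) (hb : ∀ x, H x ≠ ⊤) :
    ∫⁻ x, H x ∂ν = ∫⁻ t in Set.Ioi (0:ℝ), ν {x | ENNReal.ofReal t < H x} := by
  have h1 : ∫⁻ x, H x ∂ν = ∫⁻ x, ENNReal.ofReal ((H x).toReal) ∂ν :=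
    lintegral_congr fun x => (ENNReal.ofReal_toReal (hb x)).symm
  rw [h1, lintegral_eq_lintegral_meas_lt ν (Filter.Eventually.of_forall fun x =>
    ENNReal.toReal_nonneg) hm.ennreal_toReal.aemeasurable]
  refine setLIntegral_congr_fun_ae measurableSet_Ioi (Filter.Eventually.of_forall fun t ht => ?_)
  congr 1
  ext x
  simp only [Set.mem_setOf_eq]
  rw [ENNReal.ofReal_lt_iff_lt_toReal (le_of_lt ht) (hb x)]

lemma lintegral_le_liminf_of_opens {X : Type*} [MeasurableSpace X] [TopologicalSpace X]
    [OpensMeasurableSpace X] {μ : Measure X} {μs : ℕ → Measure X}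
    (h : X → ℝ≥0∞) (h_mble : Measurable h) (h_open : ∀ t : ℝ≥0∞, IsOpen {x | t < h x})
    (h_opens : ∀ G, IsOpen G → μ G ≤ atTop.liminf (fun i => μs i G)) :
    ∫⁻ x, h x ∂μ ≤ atTop.liminf (fun i => ∫⁻ x, h x ∂(μs i)) := by
  have trunc : ∀ k : ℕ, ∫⁻ x, min (h x) (k : ℝ≥0∞) ∂μ
      ≤ atTop.liminf (fun i => ∫⁻ x, h x ∂(μs i)) := by
    intro k
    have hmin_m : Measurable fun x => min (h x) (k : ℝ≥0∞) := h_mble.min measurable_const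
    have hmin_ne : ∀ x, min (h x) (k : ℝ≥0∞) ≠ ⊤ :=
      fun x => ne_top_of_le_ne_top (ENNReal.natCast_ne_top k) (min_le_right _ _)
    have open_lvl : ∀ t : ℝ, IsOpen {x | ENNReal.ofReal t < min (h x) (k : ℝ≥0∞)} := by
      intro t
      rcases lt_or_ge (ENNReal.ofReal t) (k : ℝ≥0∞) with hk | hk
      · have : {x | ENNReal.ofReal t < min (h x) (k : ℝ≥0∞)}
            = {x | ENNReal.ofReal t < h x} := by
          ext x; simp [lt_min_iff, hk]
        rw [this]; exact h_open _
      · have : {x | ENNReal.ofReal t < min (h x) (k : ℝ≥0∞)} = ∅ := by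
          ext x; simp only [Set.mem_setOf_eq, Set.mem_empty_iff_false, iff_false, lt_min_iff]
          exact fun hc => absurd hc.2 (not_lt.2 hk)
        rw [this]; exact isOpen_empty
    calc ∫⁻ x, min (h x) (k : ℝ≥0∞) ∂μ
        = ∫⁻ t in Set.Ioi (0:ℝ), μ {x | ENNReal.ofReal t < min (h x) (k:ℝ≥0∞)} :=
          layer_repr μ _ hmin_m hmin_ne
      _ ≤ ∫⁻ t in Set.Ioi (0:ℝ),
            atTop.liminf (fun i => μs i {x | ENNReal.ofReal t < min (h x) (k:ℝ≥0∞)}) :=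
          lintegral_mono fun t => h_opens _ (open_lvl t)
      _ ≤ atTop.liminf (fun i => ∫⁻ t in Set.Ioi (0:ℝ),
            μs i {x | ENNReal.ofReal t < min (h x) (k:ℝ≥0∞)}) := by
          refine lintegral_liminf_le fun i => ?_
          have : Antitone fun t : ℝ => μs i {x | ENNReal.ofReal t < min (h x) (k:ℝ≥0∞)} :=
            fun s t hst => measure_mono fun x hx =>
              lt_of_le_of_lt (ENNReal.ofReal_le_ofReal hst) hx
          exact this.measurable
      _ = atTop.liminf (fun i => ∫⁻ x, min (h x) (k:ℝ≥0∞) ∂(μs i)) := by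
          congr 1
          funext i
          exact (layer_repr (μs i) _ hmin_m hmin_ne).symm
      _ ≤ atTop.liminf (fun i => ∫⁻ x, h x ∂(μs i)) :=
          liminf_le_liminf (Filter.Eventually.of_forall fun i =>
            lintegral_mono fun x => min_le_left _ _)
  have hsup : ∫⁻ x, h x ∂μ = ⨆ k : ℕ, ∫⁻ x, min (h x) (k : ℝ≥0∞) ∂μ := by
    rw [← lintegral_iSup (fun k => h_mble.min measurable_const)
      (fun k l hkl x => min_le_min le_rfl (Nat.cast_le.2 hkl))]
    exact lintegral_congr fun x => (iSup_min_natCast (h x)).symm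
  rw [hsup]
  exact iSup_le trunc

lemma lintegral_le_of_thickening {Ω : Type*} [MeasurableSpace Ω] [PseudoMetricSpace Ω]
    [OpensMeasurableSpace Ω]
    {ρ σ : Measure Ω} [IsProbabilityMeasure ρ] [IsProbabilityMeasure σ]
    {ε : ℝ} (hε : 0 < ε)
    (hLP : ∀ B : Set Ω, MeasurableSet B → ρ B ≤ σ (thickening ε B) + ENNReal.ofReal ε)
    {H H' : Ω → ℝ≥0∞} (hH : Measurable H) (hH' : Measurable H')
    (hHb : ∀ x, H x ≤ 1) (hH'b : ∀ x, H' x ≤ 1)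
    (hthick : ∀ t : ℝ≥0∞, thickening ε {x | t < H x} ⊆ {x | t < H' x}) :
    ∫⁻ x, H x ∂ρ ≤ ∫⁻ x, H' x ∂σ + ENNReal.ofReal ε := by
  have hHne : ∀ x, H x ≠ ⊤ := fun x => ne_top_of_le_ne_top ENNReal.one_ne_top (hHb x)
  have hH'ne : ∀ x, H' x ≠ ⊤ := fun x => ne_top_of_le_ne_top ENNReal.one_ne_top (hH'b x)
  rw [layer_repr ρ H hH hHne, layer_repr σ H' hH' hH'ne]
  have hσmeas : Measurable fun t : ℝ => σ {x | ENNReal.ofReal t < H' x} :=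
    Antitone.measurable (fun s t hst => measure_mono fun x hx =>
      lt_of_le_of_lt (ENNReal.ofReal_le_ofReal hst) hx)
  have hpt : ∀ t ∈ Set.Ioi (0:ℝ), ρ {x | ENNReal.ofReal t < H x}
      ≤ σ {x | ENNReal.ofReal t < H' x}
        + (Set.Ioc (0:ℝ) 1).indicator (fun _ => ENNReal.ofReal ε) t := by
    intro t ht
    rcases le_or_gt t 1 with ht1 | ht1
    · have hmbleB : MeasurableSet {x | ENNReal.ofReal t < H x} := hH measurableSet_Ioi
      refine le_trans (hLP _ hmbleB) ?_
      rw [Set.indicator_of_mem (Set.mem_Ioc.2 ⟨ht, ht1⟩)]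
      exact add_le_add_left (measure_mono (hthick _)) _
    · have hempty : {x | ENNReal.ofReal t < H x} = ∅ := by
        ext x
        simp only [Set.mem_setOf_eq, Set.mem_empty_iff_false, iff_false, not_lt]
        refine le_trans (hHb x) ?_
        rw [← ENNReal.ofReal_one]
        exact ENNReal.ofReal_le_ofReal ht1.le
      rw [hempty, measure_empty]
      exact zero_le
  calc ∫⁻ t in Set.Ioi (0:ℝ), ρ {x | ENNReal.ofReal t < H x}
      ≤ ∫⁻ t in Set.Ioi (0:ℝ), (σ {x | ENNReal.ofReal t < H' x}
          + (Set.Ioc (0:ℝ) 1).indicator (fun _ => ENNReal.ofReal ε) t) :=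
        setLIntegral_mono (hσmeas.add (measurable_const.indicator measurableSet_Ioc)) hpt
    _ = (∫⁻ t in Set.Ioi (0:ℝ), σ {x | ENNReal.ofReal t < H' x})
        + ∫⁻ t in Set.Ioi (0:ℝ), (Set.Ioc (0:ℝ) 1).indicator (fun _ => ENNReal.ofReal ε) t :=
        lintegral_add_right _ (measurable_const.indicator measurableSet_Ioc)
    _ ≤ (∫⁻ t in Set.Ioi (0:ℝ), σ {x | ENNReal.ofReal t < H' x}) + ENNReal.ofReal ε := by
        apply add_le_add_right
        rw [lintegral_indicator measurableSet_Ioc, setLIntegral_const,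
          Measure.restrict_apply measurableSet_Ioc,
          Set.inter_eq_left.2 (fun x hx => hx.1), Real.volume_Ioc]
        simp

lemma isClosed_inner_set {Ω : Type*} [PseudoMetricSpace Ω] (G : Set (Ω × Ω)) (δ : ℝ) :
    IsClosed {p : Ω × Ω | ball p.1 δ ×ˢ ball p.2 δ ⊆ G} := by
  rw [← isOpen_compl_iff, Metric.isOpen_iff]
  intro p hp
  rw [Set.mem_compl_iff, Set.mem_setOf_eq] at hp
  obtain ⟨q, hq, hqG⟩ := Set.not_subset.mp hp
  have hq1 : dist q.1 p.1 < δ := mem_ball.1 hq.1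
  have hq2 : dist q.2 p.2 < δ := mem_ball.1 hq.2
  set M := max (dist q.1 p.1) (dist q.2 p.2) with hM
  refine ⟨δ - M, by simp only [hM, sub_pos]; exact max_lt hq1 hq2, ?_⟩
  intro p' hp'
  rw [Set.mem_compl_iff, Set.mem_setOf_eq]
  intro hsub
  apply hqG
  apply hsub
  have hd1 : dist p.1 p'.1 < δ - M := by
    calc dist p.1 p'.1 = dist p'.1 p.1 := dist_comm _ _
    _ ≤ dist p' p := by rw [Prod.dist_eq]; exact le_max_left _ _
    _ < δ - M := mem_ball.1 hp'
  have hd2 : dist p.2 p'.2 < δ - M := by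
    calc dist p.2 p'.2 = dist p'.2 p.2 := dist_comm _ _
    _ ≤ dist p' p := by rw [Prod.dist_eq]; exact le_max_right _ _
    _ < δ - M := mem_ball.1 hp'
  constructor
  · rw [mem_ball]
    calc dist q.1 p'.1 ≤ dist q.1 p.1 + dist p.1 p'.1 := dist_triangle _ _ _
    _ < M + (δ - M) := by
        have : dist q.1 p.1 ≤ M := le_max_left _ _
        linarith
    _ = δ := by ring
  · rw [mem_ball]
    calc dist q.2 p'.2 ≤ dist q.2 p.2 + dist p.2 p'.2 := dist_triangle _ _ _
    _ < M + (δ - M) := by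
        have : dist q.2 p.2 ≤ M := le_max_right _ _
        linarith
    _ = δ := by ring


lemma prod_le_of_levyProkhorov {Ω : Type*} [MeasurableSpace Ω] [PseudoMetricSpace Ω]
    [OpensMeasurableSpace Ω] [SecondCountableTopology Ω]
    (ρ σ : Measure Ω) [IsProbabilityMeasure ρ] [IsProbabilityMeasure σ]
    {ε δ : ℝ} (hε : 0 < ε) (hεδ : 2 * ε ≤ δ)
    (hLP : ∀ B : Set Ω, MeasurableSet B → ρ B ≤ σ (thickening ε B) + ENNReal.ofReal ε)
    {G : Set (Ω × Ω)} (hG : IsOpen G) :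
    (ρ.prod ρ) {p : Ω × Ω | ball p.1 δ ×ˢ ball p.2 δ ⊆ G}
      ≤ (σ.prod σ) G + 2 * ENNReal.ofReal ε := by
  set S := {p : Ω × Ω | ball p.1 δ ×ˢ ball p.2 δ ⊆ G} with hSdef
  have hS : MeasurableSet S := (isClosed_inner_set G δ).measurableSet
  set T2 : Set (Ω × Ω) := ⋃ q ∈ S, ball q.1 ε ×ˢ ball q.2 ε with hT2def
  set T3 : Set (Ω × Ω) := ⋃ q ∈ S, ball q.1 (2*ε) ×ˢ ball q.2 ε with hT3def
  have hT2open : IsOpen T2 := isOpen_biUnion fun q _ => isOpen_ball.prod isOpen_ball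
  have hT3open : IsOpen T3 := isOpen_biUnion fun q _ => isOpen_ball.prod isOpen_ball
  set H : Ω → ℝ≥0∞ := fun x => σ (Prod.mk x ⁻¹' T2) with hHdef
  set H' : Ω → ℝ≥0∞ := fun x => σ (Prod.mk x ⁻¹' T3) with hH'def
  have hH : Measurable H := measurable_measure_prodMk_left hT2open.measurableSet
  have hH' : Measurable H' := measurable_measure_prodMk_left hT3open.measurableSet
  have hHb : ∀ x, H x ≤ 1 := fun x => prob_le_one
  have hH'b : ∀ x, H' x ≤ 1 := fun x => prob_le_one
  have hthick : ∀ t : ℝ≥0∞, thickening ε {x | t < H x} ⊆ {x | t < H' x} := by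
    intro t x' hx'
    rw [mem_thickening_iff] at hx'
    obtain ⟨x, hx, hdist⟩ := hx'
    rw [Set.mem_setOf_eq] at hx ⊢
    refine lt_of_lt_of_le hx (measure_mono ?_)
    intro y hy
    rw [Set.mem_preimage] at hy ⊢
    rw [Set.mem_iUnion₂] at hy ⊢
    obtain ⟨q, hqS, hq1, hq2⟩ := hy
    refine ⟨q, hqS, ?_, hq2⟩
    rw [mem_ball] at hq1 ⊢
    calc dist x' q.1 ≤ dist x' x + dist x q.1 := dist_triangle _ _ _
    _ < ε + ε := add_lt_add hdist hq1
    _ = 2 * ε := by ring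
  have step2 : ∀ x, ρ (Prod.mk x ⁻¹' S) ≤ H x + ENNReal.ofReal ε := by
    intro x
    refine le_trans (hLP _ (hS.preimage measurable_prodMk_left)) ?_
    refine add_le_add_left (measure_mono ?_) _
    intro y hy
    rw [mem_thickening_iff] at hy
    obtain ⟨z, hz, hyz⟩ := hy
    rw [Set.mem_preimage] at hz ⊢
    rw [Set.mem_iUnion₂]
    exact ⟨(x, z), hz, mem_ball_self hε, by rwa [mem_ball]⟩
  calc (ρ.prod ρ) S = ∫⁻ x, ρ (Prod.mk x ⁻¹' S) ∂ρ := Measure.prod_apply hS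
    _ ≤ ∫⁻ x, (H x + ENNReal.ofReal ε) ∂ρ := lintegral_mono step2
    _ = (∫⁻ x, H x ∂ρ) + ENNReal.ofReal ε := by
        rw [lintegral_add_right _ measurable_const, lintegral_const, measure_univ, mul_one]
    _ ≤ ((∫⁻ x, H' x ∂σ) + ENNReal.ofReal ε) + ENNReal.ofReal ε :=
        add_le_add_left (lintegral_le_of_thickening hε hLP hH hH' hHb hH'b hthick) _
    _ = (∫⁻ x, H' x ∂σ) + 2 * ENNReal.ofReal ε := by rw [add_assoc, ← two_mul]
    _ = (σ.prod σ) T3 + 2 * ENNReal.ofReal ε := by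
        rw [Measure.prod_apply hT3open.measurableSet]
    _ ≤ (σ.prod σ) G + 2 * ENNReal.ofReal ε := by
        refine add_le_add_left (measure_mono ?_) _
        intro p hp
        rw [hT3def, Set.mem_iUnion₂] at hp
        obtain ⟨q, hqS, hp1, hp2⟩ := hp
        apply hqS
        constructor
        · rw [mem_ball] at hp1 ⊢
          exact lt_of_lt_of_le hp1 hεδ
        · rw [mem_ball] at hp2 ⊢
          exact lt_of_lt_of_le hp2 (by linarith)

lemma ereal_half_liminf (c : ℝ) {A : ℝ≥0∞} {u : ℕ → ℝ≥0∞} (hA : A ≤ atTop.liminf u) :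
    ((1/2 : ℝ) : EReal) * ((A : EReal) + (c : EReal))
      ≤ atTop.liminf (fun n => ((1/2 : ℝ) : EReal) * ((u n : EReal) + (c : EReal))) := by
  set φ : ℝ≥0∞ → EReal := fun t => ((1/2 : ℝ) : EReal) * ((t : EReal) + (c : EReal)) with hφ
  have hhalf : (0 : EReal) ≤ ((1/2 : ℝ) : EReal) := by
    rw [show (0 : EReal) = ((0:ℝ) : EReal) from rfl, EReal.coe_le_coe_iff]; norm_num
  have φmono : Monotone φ := by
    intro a b hab
    exact mul_le_mul_of_nonneg_left
      (add_le_add_left (EReal.coe_ennreal_le_coe_ennreal_iff.2 hab) _) hhalf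
  have φcont : Continuous φ := by
    have c1 : Continuous fun t : ℝ≥0∞ => ((t : EReal) + (c : EReal)) := by
      rw [continuous_iff_continuousAt]
      intro t
      have := EReal.continuousAt_add (p := ((t : EReal), (c : EReal)))
        (Or.inr (EReal.coe_ne_bot c)) (Or.inr (EReal.coe_ne_top c))
      exact ContinuousAt.comp (f := fun s : ℝ≥0∞ => ((s : EReal), (c : EReal))) (x := t) this
        ((continuous_coe_ennreal_ereal.prodMk continuous_const).continuousAt)
    rw [continuous_iff_continuousAt]
    intro t
    have hmul := EReal.continuousAt_mul (p := (((1/2 : ℝ) : EReal), ((t : EReal) + (c : EReal))))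
      (Or.inl (by simp)) (Or.inl (by simp))
      (Or.inl (EReal.coe_ne_bot _)) (Or.inl (EReal.coe_ne_top _))
    exact ContinuousAt.comp
      (f := fun s : ℝ≥0∞ => (((1/2 : ℝ) : EReal), ((s : EReal) + (c : EReal)))) (x := t) hmul
      ((continuous_const.prodMk c1).continuousAt)
  calc φ A ≤ φ (atTop.liminf u) := φmono hA
  _ = atTop.liminf (fun n => φ (u n)) := φmono.map_liminf_of_continuousAt u φcont.continuousAt


lemma energy_eq {d : ℕ} (W : Ed d → EReal) (hW : Measurable W) (c : ℝ)
    (hb : ∀ x, (c : EReal) ≤ W x) (μ : Measure (Ed d)) [IsProbabilityMeasure μ] :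
    energy W μ = ((1 / 2 : ℝ) : EReal)
      * (((∫⁻ p : Ed d × Ed d, EReal.posPart (W (p.1 - p.2) - (c : EReal)) ∂(μ.prod μ)
          : ℝ≥0∞) : EReal) + (c : EReal)) := by
  unfold energy
  rw [eInt_eq_lintegral_add (μ.prod μ) (fun p : Ed d × Ed d => W (p.1 - p.2))
    (hW.comp (measurable_fst.sub measurable_snd)) c (fun p => hb _)]


/-- **Lemma (weak-* lower semicontinuity of the energy).** If `W` is measurable, bounded
below by a finite constant and lower semicontinuous, then the interaction energy is
weakly-* lower semicontinuous on `P(ℝ^d)`. -/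
theorem energy_weakStar_lsc
    {d : ℕ} (hd : 1 ≤ d) (W : Ed d → EReal) (hWmeas : Measurable W)
    (c : ℝ) (hbound : ∀ x, (c : EReal) ≤ W x)
    (hlsc : LowerSemicontinuous W)
    (ρ : ℕ → Measure (Ed d)) (hρ : ∀ n, IsProbabilityMeasure (ρ n))
    (ρlim : Measure (Ed d)) (hρlim : IsProbabilityMeasure ρlim)
    (hconv : ∀ f : BoundedContinuousFunction (Ed d) ℝ,
      Tendsto (fun n => ∫ x, f x ∂(ρ n)) atTop (nhds (∫ x, f x ∂ρlim))) :
    energy W ρlim ≤ Filter.liminf (fun n => energy W (ρ n)) atTop := by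
  haveI := hρlim
  have hmeas_sub : Measurable fun p : Ed d × Ed d => p.1 - p.2 :=
    measurable_fst.sub measurable_snd
  have h_mble : Measurable fun p : Ed d × Ed d => EReal.posPart (W (p.1 - p.2) - (c : EReal)) := by
    have m1 : Monotone fun z : EReal => EReal.posPart (z - (c : EReal)) :=
      fun a b hab => EReal.posPart_mono (EReal.sub_le_sub hab le_rfl)
    exact m1.measurable.comp (hWmeas.comp hmeas_sub)
  have h_open : ∀ t : ℝ≥0∞,
      IsOpen {p : Ed d × Ed d | t < EReal.posPart (W (p.1 - p.2) - (c : EReal))} := by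
    intro t
    rcases eq_or_ne t ⊤ with rfl | ht
    · have hempty : {p : Ed d × Ed d | (⊤:ℝ≥0∞) < EReal.posPart (W (p.1 - p.2) - (c : EReal))}
          = ∅ := by
        ext p; simp [not_top_lt]
      rw [hempty]; exact isOpen_empty
    · have hset : {p : Ed d × Ed d | t < EReal.posPart (W (p.1 - p.2) - (c : EReal))}
          = (fun p : Ed d × Ed d => p.1 - p.2) ⁻¹'
            (W ⁻¹' Set.Ioi ((t : EReal) + (c : EReal))) := by
        ext p
        simp only [Set.mem_setOf_eq, Set.mem_preimage, Set.mem_Ioi]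
        rw [EReal.lt_posPart_iff ht,
          EReal.lt_sub_iff_add_lt (Or.inl (EReal.coe_ne_bot c)) (Or.inl (EReal.coe_ne_top c))]
      rw [hset]
      exact (continuous_fst.sub continuous_snd).isOpen_preimage _
        (lowerSemicontinuous_iff_isOpen_preimage.mp hlsc _)
  have h_opens : ∀ G : Set (Ed d × Ed d), IsOpen G →
      (ρlim.prod ρlim) G ≤ atTop.liminf (fun n => ((ρ n).prod (ρ n)) G) := by
    set P : ℕ → ProbabilityMeasure (Ed d) := fun n => ⟨ρ n, hρ n⟩ with hPdef
    set Pl : ProbabilityMeasure (Ed d) := ⟨ρlim, hρlim⟩ with hPldef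
    have htend : Tendsto P atTop (nhds Pl) := by
      rw [ProbabilityMeasure.tendsto_iff_forall_integral_tendsto]
      intro f
      exact hconv f
    have hLPd : ∀ ε : ℝ, 0 < ε → ∀ᶠ n in atTop,
        levyProkhorovEDist ρlim (ρ n) < ENNReal.ofReal ε := by
      intro ε hε
      have h2 : Tendsto (fun n => LevyProkhorov.probabilityMeasureHomeomorph (P n)) atTop
          (nhds (LevyProkhorov.probabilityMeasureHomeomorph Pl)) :=
        (LevyProkhorov.probabilityMeasureHomeomorph.continuous.tendsto _).comp htend
      have h3 := tendsto_iff_dist_tendsto_zero.mp h2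
      filter_upwards [h3.eventually_lt_const hε] with n hn
      rw [LevyProkhorov.dist_probabilityMeasure_def] at hn
      rw [levyProkhorovEDist_comm,
        ENNReal.lt_ofReal_iff_toReal_lt (levyProkhorovEDist_ne_top _ _)]
      exact hn
    intro G hG
    set L := atTop.liminf (fun n => ((ρ n).prod (ρ n)) G) with hL
    set Sd : ℕ → Set (Ed d × Ed d) := fun m =>
      {p | ball p.1 (1/(m+1:ℝ)) ×ˢ ball p.2 (1/(m+1:ℝ)) ⊆ G} with hSd
    have hSmono : Monotone Sd := by
      intro a b hab p hp q hq
      apply hp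
      have hr : (1:ℝ)/(b+1) ≤ 1/(a+1) := by
        apply one_div_le_one_div_of_le (by positivity)
        have : (a:ℝ) ≤ b := by exact_mod_cast hab
        linarith
      exact ⟨ball_subset_ball hr hq.1, ball_subset_ball hr hq.2⟩
    have hkey : ∀ m : ℕ, (ρlim.prod ρlim) (Sd m) ≤ L + ENNReal.ofReal (1/(m+1:ℝ)) := by
      intro m
      have hδ : (0:ℝ) < 1/(m+1:ℝ) := by positivity
      have hev : ∀ᶠ n in atTop, (ρlim.prod ρlim) (Sd m)
          ≤ ((ρ n).prod (ρ n)) G + ENNReal.ofReal (1/(m+1:ℝ)) := by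
        filter_upwards [hLPd ((1/(m+1:ℝ))/2) (by positivity)] with n hn
        haveI := hρ n
        have hLP' : ∀ B : Set (Ed d), MeasurableSet B →
            ρlim B ≤ (ρ n) (thickening ((1/(m+1:ℝ))/2) B) + ENNReal.ofReal ((1/(m+1:ℝ))/2) := by
          intro B hB
          have h4 := left_measure_le_of_levyProkhorovEDist_lt hn hB
          rwa [ENNReal.toReal_ofReal (by positivity : (0:ℝ) ≤ (1/(m+1:ℝ))/2)] at h4
        have h5 := prod_le_of_levyProkhorov ρlim (ρ n)
          (by positivity : (0:ℝ) < (1/(m+1:ℝ))/2)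
          (by linarith : 2 * ((1/(m+1:ℝ))/2) ≤ 1/(m+1:ℝ)) hLP' hG
        refine le_trans h5 ?_
        have h6 : 2 * ENNReal.ofReal ((1/(m+1:ℝ))/2) = ENNReal.ofReal (1/(m+1:ℝ)) := by
          rw [two_mul, ← ENNReal.ofReal_add (by positivity) (by positivity)]
          congr 1; ring
        rw [h6]
      have h6 : (ρlim.prod ρlim) (Sd m)
          ≤ atTop.liminf (fun n => ((ρ n).prod (ρ n)) G + ENNReal.ofReal (1/(m+1:ℝ))) :=
        le_liminf_of_le (by isBoundedDefault) hev
      have h7 : atTop.liminf (fun n => ((ρ n).prod (ρ n)) G + ENNReal.ofReal (1/(m+1:ℝ)))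
          = L + ENNReal.ofReal (1/(m+1:ℝ)) := by
        have hm : Monotone fun x : ℝ≥0∞ => x + ENNReal.ofReal (1/(m+1:ℝ)) :=
          fun a b hab => add_le_add_left hab _
        exact (hm.map_liminf_of_continuousAt (fun n => ((ρ n).prod (ρ n)) G)
          (continuous_add_right _).continuousAt).symm
      rw [← h7]; exact h6
    have hcover : ⋃ m : ℕ, Sd m = G := by
      apply Set.Subset.antisymm
      · intro p hp
        obtain ⟨m, hm⟩ := Set.mem_iUnion.mp hp
        exact hm ⟨mem_ball_self (by positivity), mem_ball_self (by positivity)⟩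
      · intro p hp
        obtain ⟨r, hr, hball⟩ := Metric.isOpen_iff.mp hG p hp
        obtain ⟨m, hm⟩ := exists_nat_one_div_lt hr
        refine Set.mem_iUnion.2 ⟨m, ?_⟩
        intro q hq
        apply hball
        rw [← ball_prod_same]
        exact ⟨ball_subset_ball hm.le hq.1, ball_subset_ball hm.le hq.2⟩
    calc (ρlim.prod ρlim) G = ⨆ m : ℕ, (ρlim.prod ρlim) (Sd m) := by
          rw [← hcover]
          exact hSmono.directed_le.measure_iUnion
      _ ≤ L := by
          refine iSup_le fun m0 => ?_
          refine ENNReal.le_of_forall_pos_le_add fun η hη hL' => ?_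
          obtain ⟨m1, hm1⟩ := exists_nat_one_div_lt (show (0:ℝ) < (η:ℝ) from by exact_mod_cast hη)
          refine le_trans (measure_mono (hSmono (le_max_left m0 m1))) ?_
          refine le_trans (hkey (max m0 m1)) ?_
          refine add_le_add_right ?_ _
          have hle : (1:ℝ)/((max m0 m1 : ℕ)+1) ≤ 1/((m1:ℝ)+1) := by
            apply one_div_le_one_div_of_le (by positivity)
            have : (m1:ℝ) ≤ ((max m0 m1 : ℕ):ℝ) := by exact_mod_cast le_max_right m0 m1
            linarith
          refine le_trans (ENNReal.ofReal_le_ofReal (le_of_lt (lt_of_le_of_lt hle hm1))) ?_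
          exact le_of_eq ENNReal.ofReal_coe_nnreal
  have main := lintegral_le_liminf_of_opens
    (fun p : Ed d × Ed d => EReal.posPart (W (p.1 - p.2) - (c : EReal))) h_mble h_open h_opens
  rw [energy_eq W hWmeas c hbound ρlim]
  have hrw : (fun n => energy W (ρ n)) = fun n => ((1 / 2 : ℝ) : EReal)
      * (((∫⁻ p : Ed d × Ed d, EReal.posPart (W (p.1 - p.2) - (c : EReal))
          ∂((ρ n).prod (ρ n)) : ℝ≥0∞) : EReal) + (c : EReal)) := by
    funext n
    haveI := hρ n
    exact energy_eq W hWmeas c hbound (ρ n)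
  rw [hrw]
  exact ereal_half_liminf c main
end
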